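/- Let Σ be a d×d Metzler sign-matrix (entries in {0, ⊕, ⊖} with off-diagonal entries in {0, ⊕}). The following are equivalent: (a) every real matrix M with sgn(M) = sgn(Σ) entrywise is Hurwitz stable; (b) the matrix sgn(Σ) (with entries in {−1, 0, 1}) is Hurwitz stable; (c) all diagonal entries of Σ are ⊖ and the directed graph G_Σ (vertices {1,…,d}, edge (m,n) iff m ≠ n and Σ_{nm} ≠ 0) is acyclic. -/

import Mathlib

open Matrix

variable {d : ℕ}

/-- A real square matrix is Metzler if all its off-diagonal entries are nonnegative. -/
def Metzler (M : Matrix (Fin d) (Fin d) ℝ) : Prop :=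
  ∀ i j, i ≠ j → 0 ≤ M i j

/-- A real square matrix is Hurwitz stable if all its (complex) eigenvalues,
i.e. all roots of its characteristic polynomial, have strictly negative real part. -/
def IsHurwitz (M : Matrix (Fin d) (Fin d) ℝ) : Prop :=
  ∀ z : ℂ, (M.map (Complex.ofReal)).charpoly.IsRoot z → z.re < 0

/-- The directed graph associated with a matrix: edge from `m` to `n` iff `m ≠ n`
and the `(n, m)` entry of `M` is nonzero. -/
def edgeRel (M : Matrix (Fin d) (Fin d) ℝ) (m n : Fin d) : Prop :=
  m ≠ n ∧ M n m ≠ 0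

open Polynomial in
lemma aux_root_prod (f : Fin d → ℂ) (z : ℂ) :
    (∏ i, (X - C (f i))).IsRoot z ↔ ∃ i, z = f i := by
  simp [Polynomial.IsRoot, Polynomial.eval_prod, Finset.prod_eq_zero_iff, sub_eq_zero]

lemma aux_det_lowerTriangular {R : Type*} [CommRing R] (A : Matrix (Fin d) (Fin d) R)
    (b : Fin d → ℕ) (hinj : Function.Injective b)
    (h : ∀ i j, b i < b j → A i j = 0) :
    A.det = ∏ i, A i i := by
  classical
  set σ := Tuple.sort b with hσ
  have hsm : StrictMono (b ∘ σ) :=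
    (Tuple.monotone_sort b).strictMono_of_injective (hinj.comp σ.injective)
  have htri : (A.submatrix σ σ).BlockTriangular OrderDual.toDual := by
    intro i j hij
    exact h _ _ (hsm hij)
  calc A.det = (A.submatrix σ σ).det := (Matrix.det_submatrix_equiv_self σ A).symm
    _ = ∏ i, A.submatrix σ σ i i := Matrix.det_of_lowerTriangular _ htri
    _ = ∏ i, A i i := Equiv.prod_comp σ (fun i => A i i)

open Polynomial in
lemma aux_charpoly (A : Matrix (Fin d) (Fin d) ℂ) (b : Fin d → ℕ)
    (hinj : Function.Injective b) (h : ∀ i j, b i < b j → A i j = 0) :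
    A.charpoly = ∏ i, (X - C (A i i)) := by
  rw [Matrix.charpoly, aux_det_lowerTriangular _ b hinj ?_]
  · exact Finset.prod_congr rfl fun i _ => Matrix.charmatrix_apply_eq A i
  · intro i j hb
    have hij : i ≠ j := fun e => absurd (e ▸ hb) (lt_irrefl _)
    rw [Matrix.charmatrix_apply_ne A _ _ hij, h i j hb, map_zero, neg_zero]

lemma exists_acyclic_b (M : Matrix (Fin d) (Fin d) ℝ)
    (hacyc : ∀ m, ¬ Relation.TransGen (edgeRel M) m m) :
    ∃ b : Fin d → ℕ, Function.Injective b ∧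
      ∀ i j, i ≠ j → M i j ≠ 0 → b j < b i := by
  classical
  set r := Relation.TransGen (edgeRel M) with hr
  set pc : Fin d → ℕ := fun i => (Finset.univ.filter fun j => r j i).card with hpc
  have hmono : ∀ {i j}, r j i → pc j < pc i := by
    intro i j hji
    apply Finset.card_lt_card
    constructor
    · intro k hk
      simp only [Finset.mem_filter, Finset.mem_univ, true_and] at *
      exact hk.trans hji
    · intro hsub
      have hji' : j ∈ Finset.univ.filter fun k => r k i := by
        simp only [Finset.mem_filter, Finset.mem_univ, true_and]
        exact hji
      have := hsub hji'
      simp only [Finset.mem_filter, Finset.mem_univ, true_and] at this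
      exact hacyc j this
  have hpcd : ∀ i, pc i ≤ d := by
    intro i
    simpa using Finset.card_le_card (Finset.filter_subset _ (Finset.univ : Finset (Fin d)))
  refine ⟨fun i => pc i * d + i.val, ?_, ?_⟩
  · intro i j hij
    have hij' : pc i * d + i.val = pc j * d + j.val := hij
    have hi := i.isLt; have hj := j.isLt
    have key : ∀ a b : Fin d, pc a < pc b → pc a * d + a.val < pc b * d + b.val := by
      intro a b hab
      have h1 : (pc a + 1) * d ≤ pc b * d := Nat.mul_le_mul_right d (by omega)
      have h2 : (pc a + 1) * d = pc a * d + d := by ring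
      omega
    rcases Nat.lt_trichotomy (pc i) (pc j) with h | h | h
    · exact absurd hij' (Nat.ne_of_lt (key i j h))
    · have : i.val = j.val := by rw [h] at hij'; omega
      exact Fin.ext this
    · exact absurd hij'.symm (Nat.ne_of_lt (key j i h))
  · intro i j hij hMij
    have hrji : r j i := Relation.TransGen.single ⟨fun e => hij e.symm, hMij⟩
    have h1 : pc j < pc i := hmono hrji
    have h2 : (pc j + 1) * d ≤ pc i * d := Nat.mul_le_mul_right d (by omega)
    have h3 : (pc j + 1) * d = pc j * d + d := by ring
    have hj := j.isLt
    show pc j * d + j.val < pc i * d + i.val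
    omega

open Polynomial in
lemma charpoly_of_acyclic (M : Matrix (Fin d) (Fin d) ℝ)
    (hacyc : ∀ m, ¬ Relation.TransGen (edgeRel M) m m) :
    (M.map Complex.ofReal).charpoly = ∏ i, (X - C (M i i : ℂ)) := by
  obtain ⟨b, hinj, hb⟩ := exists_acyclic_b M hacyc
  have h0 : ∀ i j, b i < b j → (M.map Complex.ofReal) i j = 0 := by
    intro i j hbij
    by_cases hij : i = j
    · exact absurd (hij ▸ hbij) (lt_irrefl _)
    · simp only [Matrix.map_apply, Complex.ofReal_eq_zero]
      by_contra hne
      exact absurd hbij (not_lt_of_gt (hb i j hij hne))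
  rw [aux_charpoly (M.map Complex.ofReal) b hinj h0]
  exact Finset.prod_congr rfl fun i _ => by rw [Matrix.map_apply]

lemma hurwitz_of_acyclic (M : Matrix (Fin d) (Fin d) ℝ)
    (hacyc : ∀ m, ¬ Relation.TransGen (edgeRel M) m m)
    (hdiag : ∀ i, M i i < 0) : IsHurwitz M := by
  intro z hz
  rw [charpoly_of_acyclic M hacyc] at hz
  obtain ⟨i, rfl⟩ := (aux_root_prod _ z).mp hz
  simpa using hdiag i

lemma not_hurwitz_bad_diag (S : Matrix (Fin d) (Fin d) ℝ)
    (hacyc : ∀ m, ¬ Relation.TransGen (edgeRel S) m m)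
    {i : Fin d} (hi : 0 ≤ S i i) : ¬ IsHurwitz S := by
  intro hH
  have hroot : (S.map Complex.ofReal).charpoly.IsRoot (S i i : ℂ) := by
    rw [charpoly_of_acyclic S hacyc]
    exact (aux_root_prod _ _).mpr ⟨i, rfl⟩
  have := hH _ hroot
  simp only [Complex.ofReal_re] at this
  linarith


lemma ent_mul_nonneg {X Y : Matrix (Fin d) (Fin d) ℝ} (hX : ∀ i j, 0 ≤ X i j)
    (hY : ∀ i j, 0 ≤ Y i j) : ∀ i j, 0 ≤ (X * Y) i j := by
  intro i j
  rw [Matrix.mul_apply]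
  exact Finset.sum_nonneg fun k _ => mul_nonneg (hX i k) (hY k j)

lemma ent_pow_nonneg {X : Matrix (Fin d) (Fin d) ℝ} (hX : ∀ i j, 0 ≤ X i j) :
    ∀ n i j, 0 ≤ (X ^ n) i j := by
  intro n
  induction n with
  | zero =>
    intro i j
    rw [pow_zero]
    by_cases h : i = j <;> simp [Matrix.one_apply, h]
  | succ n ih =>
    rw [pow_succ]
    exact ent_mul_nonneg ih hX

lemma ent_mul_le {X X' Y Y' : Matrix (Fin d) (Fin d) ℝ}
    (hX : ∀ i j, 0 ≤ X i j) (hY : ∀ i j, 0 ≤ Y i j)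
    (hXX' : ∀ i j, X i j ≤ X' i j) (hYY' : ∀ i j, Y i j ≤ Y' i j) :
    ∀ i j, (X * Y) i j ≤ (X' * Y') i j := by
  intro i j
  rw [Matrix.mul_apply, Matrix.mul_apply]
  apply Finset.sum_le_sum
  intro k _
  exact mul_le_mul (hXX' i k) (hYY' k j) (hY k j) (le_trans (hX i k) (hXX' i k))

lemma ent_pow_le {X Y : Matrix (Fin d) (Fin d) ℝ} (hX : ∀ i j, 0 ≤ X i j)
    (hXY : ∀ i j, X i j ≤ Y i j) :
    ∀ n i j, (X ^ n) i j ≤ (Y ^ n) i j := by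
  intro n
  induction n with
  | zero => intro i j; rw [pow_zero, pow_zero]
  | succ n ih =>
    rw [pow_succ, pow_succ]
    exact ent_mul_le (ent_pow_nonneg hX n) hX ih hXY

lemma exists_path {α : Type*} {r : α → α → Prop} {a b : α} (h : Relation.TransGen r a b) :
    ∃ (k : ℕ) (u : ℕ → α), 0 < k ∧ u 0 = a ∧ u k = b ∧ ∀ t < k, r (u t) (u (t + 1)) := by
  induction h with
  | @single c hs =>
    refine ⟨1, fun t => if t = 0 then a else c, one_pos, by simp, by simp, ?_⟩
    intro t ht
    have : t = 0 := by omega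
    subst this
    simpa using hs
  | @tail bb cc hab hbc ih =>
    obtain ⟨k, u, hk, h0, hkb, hstep⟩ := ih
    refine ⟨k + 1, fun t => if t ≤ k then u t else cc, by omega, ?_, ?_, ?_⟩
    · simpa using h0
    · simp
    · intro t ht
      by_cases h1 : t < k
      · have e1 : t ≤ k := by omega
        have e2 : t + 1 ≤ k := by omega
        simpa [e1, e2] using hstep t h1
      · have e1 : t = k := by omega
        subst e1
        simpa [hkb] using hbc

lemma exists_cycle_walk {α : Type*} {r : α → α → Prop} {a : α}
    (h : Relation.TransGen r a a) :
    ∃ (k : ℕ) (w : ℕ → α), 0 < k ∧ w 0 = a ∧ (∀ t, r (w t) (w (t + 1))) ∧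
      ∀ q, w (k * q) = a := by
  obtain ⟨k, u, hk, h0, hka, hstep⟩ := exists_path h
  refine ⟨k, fun t => u (t % k), hk, by simpa [Nat.zero_mod] using h0, ?_, ?_⟩
  · intro t
    show r (u (t % k)) (u ((t + 1) % k))
    have h1 : t % k < k := Nat.mod_lt _ hk
    by_cases h2 : t % k + 1 < k
    · have e : (t + 1) % k = t % k + 1 := by
        rw [Nat.add_mod]
        have hk2 : 1 < k := by omega
        rw [Nat.mod_eq_of_lt hk2, Nat.mod_eq_of_lt h2]
      rw [e]
      exact hstep _ h1
    · have ht : t % k + 1 = k := by omega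
      have e : (t + 1) % k = 0 := by
        rcases Nat.eq_or_lt_of_le (Nat.one_le_iff_ne_zero.mpr (Nat.pos_iff_ne_zero.mp hk)) with h3 | h3
        · simp [← h3, Nat.mod_one]
        · rw [Nat.add_mod, Nat.mod_eq_of_lt h3, ht, Nat.mod_self]
      rw [e]
      have := hstep (t % k) h1
      rw [ht, hka, ← h0] at this
      exact this
  · intro q
    simp [Nat.mul_mod_right, h0]

lemma binom_lower (n k : ℕ) (a : ℝ) (ha : 1 ≤ a) (hn : 1 ≤ n) (hk : 0 < k)
    (e : ℕ → ℝ) (he0 : ∀ j, 0 ≤ e j) (he1 : ∀ q, 1 ≤ e (k * q)) :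
    (1 + a) ^ n / ((n + 1) * n ^ k) ≤
      ∑ j ∈ Finset.range (n + 1), (n.choose j : ℝ) * a ^ (n - j) * e j := by
  set t : ℕ → ℝ := fun j => (n.choose j : ℝ) * a ^ (n - j) with htdef
  have ha0 : (0:ℝ) < a := lt_of_lt_of_le one_pos ha
  have ht0 : ∀ j, 0 ≤ t j := fun j => mul_nonneg (Nat.cast_nonneg _) (pow_nonneg ha0.le _)
  have hsum : ∑ j ∈ Finset.range (n + 1), t j = (1 + a) ^ n := by
    rw [add_pow]
    apply Finset.sum_congr rfl
    intro j hj
    simp only [one_pow, one_mul, htdef]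
    ring
  have hP0 : (0:ℝ) < (1 + a) ^ n := pow_pos (by linarith) n
  -- pigeonhole
  have step1 : ∃ j, j ≤ n ∧ (1 + a) ^ n / (n + 1) ≤ t j := by
    by_contra hcon
    push_neg at hcon
    have hlt : ∑ j ∈ Finset.range (n + 1), t j <
        ∑ _j ∈ Finset.range (n + 1), (1 + a) ^ n / (n + 1) := by
      apply Finset.sum_lt_sum_of_nonempty ⟨0, Finset.mem_range.mpr (by omega)⟩
      intro j hj
      exact hcon j (Nat.lt_succ_iff.mp (Finset.mem_range.mp hj))
    rw [hsum, Finset.sum_const, Finset.card_range, nsmul_eq_mul] at hlt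
    have hne : ((n:ℝ) + 1) ≠ 0 := by positivity
    have heq : ((n + 1 : ℕ) : ℝ) * ((1 + a) ^ n / (n + 1)) = (1 + a) ^ n := by
      push_cast
      field_simp
    rw [heq] at hlt
    exact lt_irrefl _ hlt
  -- single step down
  have hstep : ∀ j, 1 ≤ j → j ≤ n → t j ≤ n * t (j - 1) := by
    intro j hj1 hjn
    have hch : n.choose j ≤ n * n.choose (j - 1) := by
      have h1 : n.choose ((j - 1) + 1) * ((j - 1) + 1) = n.choose (j - 1) * (n - (j - 1)) :=
        Nat.choose_succ_right_eq n (j - 1)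
      have hj : (j - 1) + 1 = j := by omega
      rw [hj] at h1
      calc n.choose j ≤ n.choose j * j := Nat.le_mul_of_pos_right _ (by omega)
        _ = n.choose (j - 1) * (n - (j - 1)) := h1
        _ ≤ n.choose (j - 1) * n := Nat.mul_le_mul_left _ (by omega)
        _ = n * n.choose (j - 1) := Nat.mul_comm _ _
    have hapow : a ^ (n - j) ≤ a ^ (n - (j - 1)) := by
      have he : n - (j - 1) = (n - j) + 1 := by omega
      rw [he, pow_succ]
      exact le_mul_of_one_le_right (pow_nonneg ha0.le _) ha
    calc t j = (n.choose j : ℝ) * a ^ (n - j) := rfl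
      _ ≤ ((n * n.choose (j - 1) : ℕ) : ℝ) * a ^ (n - (j - 1)) := by
          apply mul_le_mul (Nat.cast_le.mpr hch) hapow (pow_nonneg ha0.le _) (Nat.cast_nonneg _)
      _ = n * t (j - 1) := by push_cast; ring
  -- iterate
  have hiter : ∀ r j, r ≤ j → j ≤ n → t j ≤ (n:ℝ) ^ r * t (j - r) := by
    intro r
    induction r with
    | zero => intro j _ _; simp
    | succ r ih =>
      intro j hrj hjn
      have h1 : t j ≤ (n:ℝ) ^ r * t (j - r) := ih j (by omega) hjn
      have h2 : t (j - r) ≤ n * t (j - r - 1) := hstep (j - r) (by omega) (by omega)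
      have h3 : j - r - 1 = j - (r + 1) := by omega
      calc t j ≤ (n:ℝ) ^ r * t (j - r) := h1
        _ ≤ (n:ℝ) ^ r * ((n:ℝ) * t (j - r - 1)) := by
            apply mul_le_mul_of_nonneg_left h2 (pow_nonneg (Nat.cast_nonneg _) _)
        _ = (n:ℝ) ^ (r + 1) * t (j - (r + 1)) := by rw [h3]; ring
  obtain ⟨j, hjn, hjt⟩ := step1
  have hml := Nat.mod_le j k
  set j' := j - j % k with hj'def
  have hdvd : ∃ q, j' = k * q := ⟨j / k, by
    have := Nat.div_add_mod j k
    omega⟩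
  have hj'j : j' ≤ j := by omega
  have hrk : j % k ≤ k := le_of_lt (Nat.mod_lt _ hk)
  have hn1 : (1:ℝ) ≤ (n:ℝ) := by exact_mod_cast hn
  have htj' : t j ≤ (n:ℝ) ^ k * t j' := by
    calc t j ≤ (n:ℝ) ^ (j % k) * t j' := hiter (j % k) j (by omega) hjn
      _ ≤ (n:ℝ) ^ k * t j' := by
          apply mul_le_mul_of_nonneg_right (pow_le_pow_right₀ hn1 hrk) (ht0 _)
  have hnk0 : (0:ℝ) < (n:ℝ) ^ k := pow_pos (by linarith) _
  have hkey : (1 + a) ^ n / ((n + 1) * n ^ k) ≤ t j' := by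
    rw [div_le_iff₀ (by positivity)]
    have h4 : (1 + a) ^ n / (n + 1) ≤ (n:ℝ) ^ k * t j' := le_trans hjt htj'
    rw [div_le_iff₀ (by positivity)] at h4
    calc (1 + a) ^ n ≤ (n:ℝ) ^ k * t j' * ((n:ℝ) + 1) := h4
      _ = t j' * (((n:ℝ) + 1) * (n:ℝ) ^ k) := by ring
  -- conclude
  have hmem : j' ∈ Finset.range (n + 1) := Finset.mem_range.mpr (by omega)
  obtain ⟨q, hq⟩ := hdvd
  have he1' : 1 ≤ e j' := hq ▸ he1 q
  calc (1 + a) ^ n / ((n + 1) * n ^ k) ≤ t j' := hkey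
    _ ≤ t j' * e j' := le_mul_of_one_le_right (ht0 _) he1'
    _ ≤ ∑ j ∈ Finset.range (n + 1), (n.choose j : ℝ) * a ^ (n - j) * e j := by
        apply Finset.single_le_sum (f := fun j => t j * e j) ?_ hmem
        intro i _
        exact mul_nonneg (ht0 _) (he0 _)

lemma entry_add_pow (E : Matrix (Fin d) (Fin d) ℝ) (a : ℝ) (n : ℕ) (i : Fin d) :
    ((a • (1 : Matrix (Fin d) (Fin d) ℝ) + E) ^ n) i i =
      ∑ j ∈ Finset.range (n + 1), (n.choose j : ℝ) * a ^ (n - j) * (E ^ j) i i := by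
  have hc : Commute E (a • (1 : Matrix (Fin d) (Fin d) ℝ)) := (Commute.one_right E).smul_right a
  rw [add_comm, hc.add_pow, Matrix.sum_apply]
  apply Finset.sum_congr rfl
  intro j hj
  have h1 : ((n.choose j : ℕ) : Matrix (Fin d) (Fin d) ℝ)
      = ((n.choose j : ℝ) • (1 : Matrix (Fin d) (Fin d) ℝ)) := by
    have h2 := nsmul_eq_mul (α := Matrix (Fin d) (Fin d) ℝ) (n.choose j) 1
    rw [mul_one] at h2
    rw [← h2, ← Nat.cast_smul_eq_nsmul ℝ]
  rw [smul_pow, one_pow, mul_smul_comm, mul_one, h1, mul_smul_comm, mul_one]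
  rw [smul_smul]
  rw [Matrix.smul_apply, smul_eq_mul]


open Polynomial in
lemma eval_charpoly_eq_det (A : Matrix (Fin d) (Fin d) ℂ) (z : ℂ) :
    A.charpoly.eval z = (z • (1 : Matrix (Fin d) (Fin d) ℂ) - A).det := by
  rw [Matrix.charpoly, ← Polynomial.coe_evalRingHom, RingHom.map_det]
  congr 1
  ext i j
  by_cases h : i = j
  · subst h
    simp [Matrix.charmatrix_apply_eq, Matrix.one_apply]
  · simp [Matrix.charmatrix_apply_ne _ _ _ h, Matrix.one_apply, h]

lemma spectrum_root (A : Matrix (Fin d) (Fin d) ℂ) (z : ℂ) (hz : z ∈ spectrum ℂ A) :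
    A.charpoly.IsRoot z := by
  rw [spectrum.mem_iff] at hz
  have h1 : algebraMap ℂ (Matrix (Fin d) (Fin d) ℂ) z = z • 1 :=
    Algebra.algebraMap_eq_smul_one z
  rw [h1] at hz
  rw [Polynomial.IsRoot, eval_charpoly_eq_det]
  by_contra hdet
  exact hz ((Matrix.isUnit_iff_isUnit_det _).mpr (isUnit_iff_ne_zero.mpr hdet))


open scoped ENNReal NNReal in
set_option maxHeartbeats 2000000 in
lemma not_hurwitz_of_cycle (S : Matrix (Fin d) (Fin d) ℝ)
    (hsgn : ∀ i j, S i j = -1 ∨ S i j = 0 ∨ S i j = 1)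
    (hMz : ∀ i j, i ≠ j → 0 ≤ S i j)
    {m : Fin d} (hcyc : Relation.TransGen (edgeRel S) m m) : ¬ IsHurwitz S := by
  intro hH
  classical
  obtain ⟨k, w, hk, hw0, hstep, hper⟩ := exists_cycle_walk hcyc
  haveI : Nonempty (Fin d) := ⟨m⟩
  set E : Matrix (Fin d) (Fin d) ℝ := fun i j => if i = j then 0 else S i j with hEdef
  have hE0 : ∀ i j, 0 ≤ E i j := by
    intro i j
    by_cases h : i = j
    · simp [hEdef, h]
    · simpa [hEdef, h] using hMz i j h
  have hE1 : ∀ t, 1 ≤ E (w (t + 1)) (w t) := by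
    intro t
    obtain ⟨hne, hS⟩ := hstep t
    have hne' : w (t + 1) ≠ w t := fun e => hne e.symm
    have hge : 0 ≤ S (w (t + 1)) (w t) := hMz _ _ hne'
    rcases hsgn (w (t + 1)) (w t) with h | h | h
    · linarith
    · exact absurd h hS
    · simp only [hEdef, if_neg hne']
      rw [h]
  have hEpow : ∀ q t, 1 ≤ (E ^ q) (w (t + q)) (w t) := by
    intro q
    induction q with
    | zero => intro t; simp [Matrix.one_apply]
    | succ q ih =>
      intro t
      rw [pow_succ']
      rw [Matrix.mul_apply]
      have hterm : 1 ≤ E (w (t + (q + 1))) (w (t + q)) := by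
        have : t + (q + 1) = (t + q) + 1 := by omega
        rw [this]
        exact hE1 (t + q)
      calc (1:ℝ) ≤ E (w (t + (q+1))) (w (t + q)) * (E ^ q) (w (t + q)) (w t) := by
            nlinarith [ih t, hterm, ent_pow_nonneg hE0 q (w (t+q)) (w t)]
        _ ≤ ∑ x, E (w (t + (q+1))) x * (E ^ q) x (w t) := by
            apply Finset.single_le_sum (f := fun x => E (w (t + (q+1))) x * (E ^ q) x (w t))
              (fun x _ => mul_nonneg (hE0 _ _) (ent_pow_nonneg hE0 q _ _)) (Finset.mem_univ (w (t+q)))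
  -- eigenvalue data
  set N := S.map Complex.ofReal with hNdef
  have hmonic := Matrix.charpoly_monic N
  have hNdeg : N.charpoly.natDegree = d := by
    simpa [Fintype.card_fin] using Matrix.charpoly_natDegree_eq_dim N
  have hd1 : 0 < d := m.pos
  obtain ⟨z0, hz0⟩ : ∃ z, N.charpoly.IsRoot z := by
    apply Complex.exists_root
    rw [← Polynomial.natDegree_pos_iff_degree_pos, hNdeg]
    exact hd1
  set F := N.charpoly.roots.toFinset with hFdef
  have hmemF : ∀ z, N.charpoly.IsRoot z → z ∈ F := by
    intro z hz
    rw [hFdef, Multiset.mem_toFinset, Polynomial.mem_roots hmonic.ne_zero]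
    exact hz
  have hFne : F.Nonempty := ⟨z0, hmemF z0 hz0⟩
  set δ := F.inf' hFne (fun z => -z.re) with hδdef
  have hδpos : 0 < δ := by
    rw [hδdef, Finset.lt_inf'_iff]
    intro z hz
    have hz' : N.charpoly.IsRoot z := by
      rw [hFdef, Multiset.mem_toFinset, Polynomial.mem_roots hmonic.ne_zero] at hz
      exact hz
    have := hH z hz'
    linarith
  set R := F.sup' hFne (fun z => ‖z‖) with hRdef
  have hRb : ∀ z ∈ F, ‖z‖ ≤ R := fun z hz => Finset.le_sup' _ hz
  have hR0 : 0 ≤ R := le_trans (norm_nonneg z0) (hRb z0 (hmemF z0 hz0))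
  obtain ⟨c, hc⟩ := exists_nat_gt (max 2 (max R ((δ^2 + R^2)/(2*δ))))
  have hc2 : 2 ≤ (c:ℝ) := le_of_lt (lt_of_le_of_lt (le_max_left _ _) hc)
  have hcR : R < (c:ℝ) := lt_of_le_of_lt (le_trans (le_max_left _ _) (le_max_right _ _)) hc
  have hcδ : (δ^2 + R^2)/(2*δ) < (c:ℝ) :=
    lt_of_le_of_lt (le_trans (le_max_right _ _) (le_max_right _ _)) hc
  set a : ℝ := (c:ℝ) - 1 with hadef
  have ha1 : 1 ≤ a := by rw [hadef]; linarith
  set Bc := S + (c:ℝ) • (1 : Matrix (Fin d) (Fin d) ℝ) with hBcdef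
  set M' := a • (1 : Matrix (Fin d) (Fin d) ℝ) + E with hM'def
  have hdiagS : ∀ i, -1 ≤ S i i := by
    intro i
    rcases hsgn i i with h | h | h <;> rw [h] <;> norm_num
  have hM'0 : ∀ i j, 0 ≤ M' i j := by
    intro i j
    by_cases h : i = j
    · subst h
      simp only [hM'def, Matrix.add_apply, Matrix.smul_apply, Matrix.one_apply_eq, smul_eq_mul,
        mul_one]
      have := hE0 i i
      linarith
    · simp only [hM'def, Matrix.add_apply, Matrix.smul_apply, Matrix.one_apply_ne h, smul_eq_mul,
        mul_zero, zero_add]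
      exact hE0 i j
  have hM'Bc : ∀ i j, M' i j ≤ Bc i j := by
    intro i j
    by_cases h : i = j
    · subst h
      have hEii : E i i = 0 := by simp [hEdef]
      simp only [hM'def, hBcdef, Matrix.add_apply, Matrix.smul_apply, Matrix.one_apply_eq,
        smul_eq_mul, mul_one, hEii]
      have := hdiagS i
      rw [hadef]
      linarith
    · simp only [hM'def, hBcdef, Matrix.add_apply, Matrix.smul_apply, Matrix.one_apply_ne h,
        smul_eq_mul, mul_zero, zero_add, add_zero, hEdef, if_neg h]
      show (a • (1 : Matrix (Fin d) (Fin d) ℝ)) i j + (if i = j then 0 else S i j) ≤ S i j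
      rw [Matrix.smul_apply, Matrix.one_apply_ne h, smul_eq_mul, mul_zero, zero_add, if_neg h]
  have hElow : ∀ n : ℕ, 1 ≤ n → (c:ℝ)^n / ((n+1) * n^k) ≤ (Bc ^ n) m m := by
    intro n hn
    have h1 := binom_lower n k a ha1 hn hk (fun j => (E ^ j) m m)
      (fun j => ent_pow_nonneg hE0 j m m)
      (fun q => by
        have := hEpow (k * q) 0
        rwa [Nat.zero_add, hper q, hw0] at this)
    rw [← entry_add_pow E a n m] at h1
    have h2 : (1 : ℝ) + a = (c:ℝ) := by rw [hadef]; ring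
    rw [h2] at h1
    calc (c:ℝ)^n / ((n+1) * n^k) ≤ (M' ^ n) m m := h1
      _ ≤ (Bc ^ n) m m := ent_pow_le hM'0 hM'Bc n m m
  -- norm instances
  letI instA : NormedRing (Matrix (Fin d) (Fin d) ℂ) := Matrix.linftyOpNormedRing
  letI instB : NormedAlgebra ℂ (Matrix (Fin d) (Fin d) ℂ) := Matrix.linftyOpNormedAlgebra
  haveI : Nontrivial (Matrix (Fin d) (Fin d) ℂ) :=
    ⟨0, 1, fun h => one_ne_zero (α := ℂ) (by simpa using (congrFun (congrFun h m) m).symm)⟩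
  set Nc := N + (c:ℂ) • (1 : Matrix (Fin d) (Fin d) ℂ) with hNcdef
  have hNc : Nc = Bc.map Complex.ofReal := by
    ext i j
    by_cases h : i = j
    · subst h
      simp [hNcdef, hBcdef, hNdef, Matrix.map_apply, Matrix.add_apply, Matrix.smul_apply,
        Matrix.one_apply_eq]
    · simp [hNcdef, hBcdef, hNdef, Matrix.map_apply, Matrix.add_apply, Matrix.smul_apply,
        Matrix.one_apply_ne h]
  have hpow : ∀ n : ℕ, Nc ^ n = (Bc ^ n).map Complex.ofReal := by
    intro n
    rw [hNc]
    have h1 : Bc.map Complex.ofReal = Complex.ofRealHom.mapMatrix Bc := rfl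
    rw [h1, ← map_pow]
    rfl
  have hnormlow : ∀ n : ℕ, (Bc ^ n) m m ≤ ‖Nc ^ n‖ := by
    intro n
    have h1 : ‖(Nc ^ n) m m‖₊ ≤ ‖Nc ^ n‖₊ := by
      rw [Matrix.linfty_opNNNorm_def]
      calc ‖(Nc ^ n) m m‖₊ ≤ ∑ j, ‖(Nc ^ n) m j‖₊ :=
            Finset.single_le_sum (f := fun j => ‖(Nc ^ n) m j‖₊)
              (fun _ _ => zero_le) (Finset.mem_univ m)
        _ ≤ _ := Finset.le_sup (f := fun i => ∑ j, ‖(Nc ^ n) i j‖₊) (Finset.mem_univ m)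
    have h2 : (Bc ^ n) m m ≤ ‖(Nc ^ n) m m‖ := by
      rw [hpow n, Matrix.map_apply, Complex.norm_real, Real.norm_eq_abs]
      exact le_abs_self _
    calc (Bc ^ n) m m ≤ ‖(Nc ^ n) m m‖ := h2
      _ ≤ ‖Nc ^ n‖ := h1
  obtain ⟨z, hzspec, hznorm⟩ := spectrum.exists_nnnorm_eq_spectralRadius (a := Nc)
  have hzc : (c:ℝ) ≤ ‖z‖ := by
    by_contra hlt
    push_neg at hlt
    set rr : ℝ := (‖z‖ + c) / 2 with hrrdef
    have hz0' : (0:ℝ) ≤ ‖z‖ := norm_nonneg z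
    have hrr1 : ‖z‖ < rr := by rw [hrrdef]; linarith
    have hrr2 : rr < c := by rw [hrrdef]; linarith
    have hrr0 : 0 < rr := by rw [hrrdef]; linarith
    set rn : ℝ≥0 := ⟨rr, hrr0.le⟩ with hrndef
    have hT := spectrum.pow_nnnorm_pow_one_div_tendsto_nhds_spectralRadius Nc
    rw [← hznorm] at hT
    have hev1 : ∀ᶠ n : ℕ in Filter.atTop, (‖Nc ^ n‖₊ : ℝ≥0∞) ^ (1/(n:ℝ)) < (rn : ℝ≥0∞) := by
      apply hT.eventually_lt_const
      rw [ENNReal.coe_lt_coe]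
      have : ‖z‖₊ = (⟨‖z‖, hz0'⟩ : ℝ≥0) := rfl
      rw [← NNReal.coe_lt_coe]
      exact hrr1
    have hgt1 : 1 < (c:ℝ)/rr := (one_lt_div hrr0).mpr hrr2
    have hev2 : ∀ᶠ n : ℕ in Filter.atTop, (n:ℝ)^(k+2) / ((c:ℝ)/rr)^n < 1 :=
      (tendsto_pow_const_div_const_pow_of_one_lt (k+2) hgt1).eventually_lt_const one_pos
    have hev3 : ∀ᶠ n : ℕ in Filter.atTop, 2 ≤ n := Filter.eventually_ge_atTop 2
    obtain ⟨n, h1, h2, h3⟩ := (hev1.and (hev2.and hev3)).exists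
    have hn1 : 1 ≤ n := by omega
    have hncast : ((n:ℝ)) ≠ 0 := Nat.cast_ne_zero.mpr (by omega)
    have hx : (‖Nc ^ n‖₊ : ℝ≥0∞) ≤ ((rn : ℝ≥0∞)) ^ (n:ℕ) := by
      have e1 : ((‖Nc ^ n‖₊ : ℝ≥0∞) ^ (1/(n:ℝ))) ^ ((n:ℕ):ℝ) = (‖Nc ^ n‖₊ : ℝ≥0∞) := by
        rw [← ENNReal.rpow_mul, one_div_mul_cancel hncast, ENNReal.rpow_one]
      calc (‖Nc ^ n‖₊ : ℝ≥0∞) = ((‖Nc ^ n‖₊ : ℝ≥0∞) ^ (1/(n:ℝ))) ^ ((n:ℕ):ℝ) := e1.symm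
        _ ≤ ((rn : ℝ≥0∞)) ^ ((n:ℕ):ℝ) := ENNReal.rpow_le_rpow h1.le (Nat.cast_nonneg n)
        _ = ((rn : ℝ≥0∞)) ^ (n:ℕ) := ENNReal.rpow_natCast _ n
    have hreal : ‖Nc ^ n‖ ≤ rr ^ n := by
      have h' : (‖Nc ^ n‖₊ : ℝ≥0∞) ≤ ((rn ^ n : ℝ≥0) : ℝ≥0∞) := by rwa [ENNReal.coe_pow]
      rw [ENNReal.coe_le_coe] at h'
      have h'' := NNReal.coe_le_coe.mpr h'
      rwa [coe_nnnorm, NNReal.coe_pow] at h''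
    have hlow := le_trans (hElow n hn1) (hnormlow n)
    have hfin : (c:ℝ)^n / ((n+1) * n^k) ≤ rr ^ n := le_trans hlow hreal
    have hrrn : (0:ℝ) < rr ^ n := pow_pos hrr0 n
    have hc0 : (0:ℝ) < c := by linarith
    have h2' : (n:ℝ)^(k+2) * rr^n < (c:ℝ)^n := by
      rw [div_lt_one (by positivity)] at h2
      rw [div_pow] at h2
      calc (n:ℝ)^(k+2) * rr^n < ((c:ℝ)^n / rr^n) * rr^n :=
            mul_lt_mul_of_pos_right h2 hrrn
        _ = (c:ℝ)^n := by field_simp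
    have hfin' : (c:ℝ)^n ≤ rr^n * (((n:ℝ)+1) * (n:ℝ)^k) := by
      rwa [div_le_iff₀ (by positivity)] at hfin
    have hcomb : (n:ℝ)^(k+2) < ((n:ℝ)+1) * (n:ℝ)^k := by
      have hstep2 : (n:ℝ)^(k+2) * rr^n < (((n:ℝ)+1) * (n:ℝ)^k) * rr^n := by nlinarith
      exact lt_of_mul_lt_mul_right hstep2 hrrn.le
    have hn2 : (2:ℝ) ≤ (n:ℝ) := by exact_mod_cast h3
    have hpk : (0:ℝ) < (n:ℝ)^k := pow_pos (by linarith) k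
    have hn1sq : (n:ℝ)+1 ≤ (n:ℝ)^2 := by nlinarith
    have hfinal : ((n:ℝ)+1) * (n:ℝ)^k ≤ (n:ℝ)^(k+2) := by
      calc ((n:ℝ)+1) * (n:ℝ)^k ≤ (n:ℝ)^2 * (n:ℝ)^k :=
            mul_le_mul_of_nonneg_right hn1sq hpk.le
        _ = (n:ℝ)^(k+2) := by ring
    linarith
  -- now use the root z - c
  have hrootNc : Nc.charpoly.IsRoot z := spectrum_root Nc z hzspec
  have hroot : N.charpoly.IsRoot (z - (c:ℂ)) := by
    rw [Polynomial.IsRoot, eval_charpoly_eq_det] at hrootNc ⊢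
    have e : (z - (c:ℂ)) • (1 : Matrix (Fin d) (Fin d) ℂ) - N = z • 1 - Nc := by
      rw [hNcdef, sub_smul]
      abel
    rw [e]
    exact hrootNc
  have hwF : z - (c:ℂ) ∈ F := hmemF _ hroot
  have hre : δ ≤ -(z - (c:ℂ)).re := Finset.inf'_le _ hwF
  have hnw : ‖z - (c:ℂ)‖ ≤ R := hRb _ hwF
  set u : ℂ := z - (c:ℂ) with hudef
  have hzu : z = u + (c:ℂ) := by rw [hudef]; ring
  have hre' : u.re + c ≤ (c:ℝ) - δ := by linarith
  have hreabs : |u.re| ≤ R := le_trans (Complex.abs_re_le_norm u) hnw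
  have himabs : |u.im| ≤ R := le_trans (Complex.abs_im_le_norm u) hnw
  have hpos : 0 ≤ u.re + c := by
    have := neg_abs_le u.re
    linarith
  have hnormsq : ‖z‖^2 = (u.re + c)^2 + u.im^2 := by
    rw [hzu, Complex.sq_norm, Complex.normSq_apply]
    simp only [Complex.add_re, Complex.add_im, Complex.ofReal_re, Complex.ofReal_im,
      Complex.natCast_re, Complex.natCast_im, add_zero]
    ring
  have hc2' : (c:ℝ)^2 ≤ ‖z‖^2 := pow_le_pow_left₀ (by linarith) hzc 2
  have hsq1 : (u.re + c)^2 ≤ ((c:ℝ) - δ)^2 := pow_le_pow_left₀ hpos hre' 2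
  have hsq2 : u.im^2 ≤ R^2 :=
    sq_le_sq' (by linarith [neg_abs_le u.im]) (le_trans (le_abs_self _) himabs)
  have h2δ : δ^2 + R^2 < 2*δ*(c:ℝ) := by
    rw [div_lt_iff₀ (by linarith)] at hcδ
    linarith
  nlinarith [hnormsq, hc2', hsq1, hsq2]

theorem sign_stability_iff (S : Matrix (Fin d) (Fin d) ℝ)
    (hsgn : ∀ i j, S i j = -1 ∨ S i j = 0 ∨ S i j = 1)
    (hMz : ∀ i j, i ≠ j → 0 ≤ S i j) :
    ((∀ M : Matrix (Fin d) (Fin d) ℝ,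
        (∀ i j, Real.sign (M i j) = S i j) → IsHurwitz M) ↔ IsHurwitz S)
    ∧ (IsHurwitz S ↔
        ((∀ i, S i i = -1) ∧ ∀ m, ¬ Relation.TransGen (edgeRel S) m m)) := by
  have key_bc : IsHurwitz S → (∀ i, S i i = -1) ∧ (∀ m, ¬ Relation.TransGen (edgeRel S) m m) := by
    intro hb
    have hacyc : ∀ m, ¬ Relation.TransGen (edgeRel S) m m := fun m hm =>
      not_hurwitz_of_cycle S hsgn hMz hm hb
    refine ⟨fun i => ?_, hacyc⟩
    rcases hsgn i i with h | h | h
    · exact h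
    · exact absurd hb (not_hurwitz_bad_diag S hacyc (le_of_eq h.symm))
    · exact absurd hb (not_hurwitz_bad_diag S hacyc (h ▸ zero_le_one))
  have key_cb : ((∀ i, S i i = -1) ∧ (∀ m, ¬ Relation.TransGen (edgeRel S) m m)) → IsHurwitz S := by
    rintro ⟨h1, h2⟩
    exact hurwitz_of_acyclic S h2 (fun i => by rw [h1 i]; norm_num)
  have key_ca : ((∀ i, S i i = -1) ∧ (∀ m, ¬ Relation.TransGen (edgeRel S) m m)) →
      ∀ M : Matrix (Fin d) (Fin d) ℝ, (∀ i j, Real.sign (M i j) = S i j) → IsHurwitz M := by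
    rintro ⟨h1, h2⟩ M hM
    apply hurwitz_of_acyclic
    · intro a ha
      apply h2 a
      apply Relation.TransGen.mono (r := edgeRel M) ?_ a a ha
      rintro x y ⟨hne, h0⟩
      refine ⟨hne, fun hS => h0 ?_⟩
      rw [← Real.sign_eq_zero_iff, hM y x]
      exact hS
    · intro i
      rcases lt_trichotomy (M i i) 0 with h | h | h
      · exact h
      · have := hM i i
        rw [h, Real.sign_zero] at this
        rw [h1 i] at this
        norm_num at this
      · have := hM i i
        rw [Real.sign_of_pos h, h1 i] at this
        norm_num at this
  constructor
  · constructor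
    · intro ha
      apply ha S
      intro i j
      rcases hsgn i j with h | h | h <;> rw [h]
      · exact Real.sign_of_neg (by norm_num)
      · exact Real.sign_zero
      · exact Real.sign_of_pos (by norm_num)
    · intro hb M hM
      exact key_ca (key_bc hb) M hM
  · exact ⟨key_bc, key_cb⟩
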